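/- Let X be a separable metrizable indecomposable semicontinuum with more than one point. Then there exists a sequence (K_n)_{n<ω} of pairwise disjoint proper subcontinua of X which converges to X in the Vietoris topology; that is, for every finite collection U_1, …, U_k of nonempty open subsets of X there exists N such that for all n ≥ N and all i ≤ k, K_n ∩ U_i ≠ ∅. -/

import Mathlib

open Set Metric TopologicalSpace

section Proof2Aux

variable {X : Type*} [TopologicalSpace X]



/-- The connected component of `x` inside a closed set is closed. -/
lemma isClosed_connectedComponentIn' {F : Set X} (hF : IsClosed F) {x : X} :
    IsClosed (connectedComponentIn F x) := by
  by_cases hx : x ∈ F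
  · have h1 : connectedComponentIn F x ⊆ closure (connectedComponentIn F x) := subset_closure
    have h2 : closure (connectedComponentIn F x) ⊆ F :=
      (closure_mono (connectedComponentIn_subset F x)).trans hF.closure_eq.subset
    have h3 : closure (connectedComponentIn F x) ⊆ connectedComponentIn F x :=
      (isPreconnected_connectedComponentIn.closure).subset_connectedComponentIn
        (subset_closure (mem_connectedComponentIn hx)) h2
    exact h3.antisymm h1 ▸ isClosed_closure
  · rw [connectedComponentIn_eq_empty hx]; exact isClosed_empty

/-- Boundary bumping, in the form we need: if `N` is compact preconnected, `A ⊆ N` closed and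
`A ≠ N`, then the component of `x` in `A` meets the closure of `N \ A`. -/
lemma bb [T2Space X] {N A : Set X} (hN : IsCompact N) (hNc : IsPreconnected N)
    (hA : IsClosed A) (hAN : A ⊆ N) (hne : A ≠ N) {x : X} (hx : x ∈ A) :
    (connectedComponentIn A x ∩ closure (N \ A)).Nonempty := by
  by_contra hcon
  rw [not_nonempty_iff_eq_empty] at hcon
  have hAcomp : IsCompact A := hN.of_isClosed_subset hA hAN
  haveI : CompactSpace A := isCompact_iff_compactSpace.mp hAcomp
  set x' : A := ⟨x, hx⟩
  set F' : Set A := Subtype.val ⁻¹' (closure (N \ A)) with hF'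
  have hF'cl : IsClosed F' := isClosed_closure.preimage continuous_subtype_val
  have hF'cp : IsCompact F' := hF'cl.isCompact
  have hinter : (F' ∩ ⋂ Z : {Z : Set A // IsClopen Z ∧ x' ∈ Z}, (Z : Set A)) = ∅ := by
    rw [eq_empty_iff_forall_notMem]
    rintro a ⟨haF, haI⟩
    have ha : a ∈ connectedComponent x' := by
      rw [connectedComponent_eq_iInter_isClopen x']; exact haI
    have h1 : (a : X) ∈ connectedComponentIn A x := by
      rw [connectedComponentIn_eq_image hx]; exact ⟨a, ha, rfl⟩
    have : (a : X) ∈ connectedComponentIn A x ∩ closure (N \ A) := ⟨h1, haF⟩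
    rw [hcon] at this; exact this
  haveI : Nonempty {Z : Set A // IsClopen Z ∧ x' ∈ Z} := ⟨⟨univ, isClopen_univ, mem_univ _⟩⟩
  obtain ⟨Z₀, hZ₀⟩ := hF'cp.elim_directed_family_closed _
    (fun Z => Z.2.1.isClosed) hinter
    (fun Z₁ Z₂ => ⟨⟨Z₁ ∩ Z₂, Z₁.2.1.inter Z₂.2.1, ⟨Z₁.2.2, Z₂.2.2⟩⟩,
      inter_subset_left, inter_subset_right⟩)
  set E : Set X := Subtype.val '' (Z₀ : Set A) with hE
  have hEA : E ⊆ A := by rintro _ ⟨a, _, rfl⟩; exact a.2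
  have hxE : x ∈ E := ⟨x', Z₀.2.2, rfl⟩
  have hEcl : IsClosed E := ((Z₀.2.1.isClosed.isCompact).image continuous_subtype_val).isClosed
  have hEF : E ∩ closure (N \ A) = ∅ := by
    rw [eq_empty_iff_forall_notMem]
    rintro w ⟨⟨a, haZ, rfl⟩, hwF⟩
    have : a ∈ F' ∩ Z₀ := ⟨hwF, haZ⟩
    rw [hZ₀] at this; exact this
  obtain ⟨O, hOopen, hOZ⟩ := isOpen_induced_iff.mp Z₀.2.1.isOpen
  have hEAO : E = A ∩ O := by
    rw [hE, ← hOZ, Subtype.image_preimage_coe, inter_comm]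
  set u : Set X := O ∩ (closure (N \ A))ᶜ with hu
  have hNuE : N ∩ u = E := by
    apply Subset.antisymm
    · rintro w ⟨hwN, hwO, hwcl⟩
      have hwA : w ∈ A := by
        by_contra hwA
        exact hwcl (subset_closure ⟨hwN, hwA⟩)
      rw [hEAO]; exact ⟨hwA, hwO⟩
    · intro w hw
      refine ⟨hAN (hEA hw), (hEAO ▸ hw).2, ?_⟩
      intro hcl
      rw [eq_empty_iff_forall_notMem] at hEF
      exact hEF w ⟨hw, hcl⟩
  obtain ⟨p, hpN, hpA⟩ : ∃ p, p ∈ N ∧ p ∉ A := by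
    by_contra hp
    push_neg at hp
    exact hne (hAN.antisymm hp)
  have := hNc u Eᶜ (hOopen.inter isClosed_closure.isOpen_compl) hEcl.isOpen_compl
    (fun w hwN => by
      by_cases hwE : w ∈ E
      · exact Or.inl ((hNuE.symm.subset hwE).2)
      · exact Or.inr hwE)
    ⟨x, hAN hx, (hNuE.symm.subset hxE).2⟩
    ⟨p, hpN, fun hpE => hpA (hEA hpE)⟩
  obtain ⟨q, hqN, hqu, hqE⟩ := this
  exact hqE (hNuE.subset ⟨hqN, hqu⟩)


def cls (M : Set X) (z : X) : Set X :=
  {w | ∃ L : Set X, IsCompact L ∧ IsPreconnected L ∧ L ∩ M = ∅ ∧ z ∈ L ∧ w ∈ L}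

lemma cls_self {M : Set X} {z : X} (hz : z ∉ M) : z ∈ cls M z :=
  ⟨{z}, isCompact_singleton, isPreconnected_singleton,
    singleton_inter_eq_empty.mpr hz, rfl, rfl⟩

lemma subset_cls {M : Set X} {z : X} {L : Set X} (h : IsCompact L) (hc : IsPreconnected L)
    (hM : L ∩ M = ∅) (hz : z ∈ L) : L ⊆ cls M z := fun _ hw' => ⟨L, h, hc, hM, hz, hw'⟩

lemma cls_preconn {M : Set X} {z : X} : IsPreconnected (cls M z) := by
  apply isPreconnected_of_forall z
  rintro w ⟨L, h1, h2, h3, h4, h5⟩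
  exact ⟨L, subset_cls h1 h2 h3 h4, h4, h5, h2⟩


lemma finUnion
    (hindec : ¬ ∃ A B : Set X,
      IsClosed A ∧ IsConnected A ∧ A ≠ Set.univ ∧
      IsClosed B ∧ IsConnected B ∧ B ≠ Set.univ ∧ A ∪ B = Set.univ)
    {ι : Type*} (t : Finset ι) (A : ι → Set X) (x₀ : X)
    (hcl : ∀ i, IsClosed (A i)) (hc : ∀ i, IsPreconnected (A i)) (hu : ∀ i, A i ≠ univ)
    (hx : ∀ i, x₀ ∈ A i) : (⋃ i ∈ t, A i) ≠ univ := by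
  classical
  induction t using Finset.induction_on with
  | empty =>
    intro h
    have hmem : x₀ ∈ ⋃ i ∈ (∅ : Finset ι), A i := h.symm ▸ mem_univ x₀
    simp at hmem
  | @insert a s ha ih =>
    intro h
    rw [Finset.set_biUnion_insert] at h
    rcases s.eq_empty_or_nonempty with rfl | ⟨j, hj⟩
    · simp only [Finset.notMem_empty, iUnion_of_empty, iUnion_empty, union_empty] at h
      exact hu a h
    · set B := ⋃ i ∈ s, A i with hB
      have hBcl : IsClosed B := s.finite_toSet.isClosed_biUnion (fun i _ => hcl i)
      have hBc : IsPreconnected B := by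
        apply isPreconnected_of_forall x₀
        intro y hy
        rw [hB, mem_iUnion₂] at hy
        obtain ⟨i, hi, hyi⟩ := hy
        exact ⟨A i, subset_biUnion_of_mem hi, hx i, hyi, hc i⟩
      have hBu : B ≠ univ := ih
      have hBne : B.Nonempty := ⟨x₀, mem_biUnion hj (hx j)⟩
      exact hindec ⟨A a, B, hcl a, ⟨⟨x₀, hx a⟩, hc a⟩, hu a, hBcl, ⟨hBne, hBc⟩, hBu, h⟩


/-- In an indecomposable connected space, every proper closed connected nonempty subset
has empty interior. -/
lemma lemma1 [ConnectedSpace X]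
    (hindec : ¬ ∃ A B : Set X,
      IsClosed A ∧ IsConnected A ∧ A ≠ Set.univ ∧
      IsClosed B ∧ IsConnected B ∧ B ≠ Set.univ ∧ A ∪ B = Set.univ)
    {C : Set X} (hCcl : IsClosed C) (hCc : IsPreconnected C) (hCne : C.Nonempty)
    (hCu : C ≠ univ) : interior C = ∅ := by
  by_contra hint
  obtain ⟨v0, hv0⟩ := nonempty_iff_ne_empty.mpr hint
  set D := closure Cᶜ with hD
  have hDne : D.Nonempty := (nonempty_compl.mpr hCu).closure
  have hDcl : IsClosed D := isClosed_closure
  have hDu : D ≠ univ := by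
    intro h
    have hv0D : v0 ∈ D := h ▸ mem_univ v0
    rcases mem_closure_iff.mp hv0D (interior C) isOpen_interior hv0 with ⟨w, hw1, hw2⟩
    exact hw2 (interior_subset hw1)
  have hcover : C ∪ D = univ := by
    apply eq_univ_of_forall; intro w
    by_cases hw : w ∈ C
    · exact Or.inl hw
    · exact Or.inr (subset_closure hw)
  by_cases hDc : IsPreconnected D
  · exact hindec ⟨C, D, hCcl, ⟨hCne, hCc⟩, hCu, hDcl, ⟨hDne, hDc⟩, hDu, hcover⟩
  · rw [IsPreconnected] at hDc
    push_neg at hDc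
    obtain ⟨u, v, hu, hv, hcov, hau, hbv, hempty⟩ := hDc
    obtain ⟨a, haD, hau'⟩ := hau
    obtain ⟨b, hbD, hbv'⟩ := hbv
    set E₁ : Set X := D ∩ vᶜ with hE₁
    set E₂ : Set X := D ∩ uᶜ with hE₂
    have hE₁cl : IsClosed E₁ := hDcl.inter hv.isClosed_compl
    have hE₂cl : IsClosed E₂ := hDcl.inter hu.isClosed_compl
    have hdisj : E₁ ∩ E₂ = ∅ := by
      rw [eq_empty_iff_forall_notMem]
      rintro w ⟨⟨hwD, hwv⟩, _, hwu⟩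
      rcases hcov hwD with h | h
      exacts [hwu h, hwv h]
    have hunion : E₁ ∪ E₂ = D := by
      apply Subset.antisymm
      · rintro w (⟨h, _⟩ | ⟨h, _⟩) <;> exact h
      · intro w hwD
        by_cases hwv : w ∈ v
        · refine Or.inr ⟨hwD, fun hwu => ?_⟩
          have : w ∈ D ∩ (u ∩ v) := ⟨hwD, hwu, hwv⟩
          rw [hempty] at this; exact this
        · exact Or.inl ⟨hwD, hwv⟩
    have hE₁u : E₁ = D ∩ u := by
      apply Subset.antisymm
      · rintro w ⟨hwD, hwv⟩
        rcases hcov hwD with h | h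
        exacts [⟨hwD, h⟩, absurd h hwv]
      · rintro w ⟨hwD, hwu⟩
        refine ⟨hwD, fun hwv => ?_⟩
        have : w ∈ D ∩ (u ∩ v) := ⟨hwD, hwu, hwv⟩
        rw [hempty] at this; exact this
    have hE₂v : E₂ = D ∩ v := by
      apply Subset.antisymm
      · rintro w ⟨hwD, hwu⟩
        rcases hcov hwD with h | h
        exacts [absurd h hwu, ⟨hwD, h⟩]
      · rintro w ⟨hwD, hwv⟩
        refine ⟨hwD, fun hwu => ?_⟩
        have : w ∈ D ∩ (u ∩ v) := ⟨hwD, hwu, hwv⟩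
        rw [hempty] at this; exact this
    have haE₁ : a ∈ E₁ := hE₁u ▸ ⟨haD, hau'⟩
    have hbE₂ : b ∈ E₂ := hE₂v ▸ ⟨hbD, hbv'⟩
    -- key connectedness fact: C together with one closed piece of D is preconnected
    have key : ∀ E E' : Set X, IsClosed E → IsClosed E' → E ∪ E' = D → E ∩ E' = ∅ →
        IsPreconnected (C ∪ E) := by
      intro E E' hEcl hE'cl hEE' hEdisj
      have hcore : ∀ p q : Set X, IsOpen p → IsOpen q → C ∪ E ⊆ p ∪ q →
          ((C ∪ E) ∩ q).Nonempty → (C ∪ E) ∩ (p ∩ q) = ∅ → C ∩ q = ∅ → False := by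
        intro p q hp hq hsub hne2 hres hCq
        set R : Set X := (C ∪ E) ∩ q with hR
        have hRE : R ⊆ E := by
          rintro w ⟨hw1 | hw1, hw2⟩
          · exfalso
            have hmem : w ∈ C ∩ q := ⟨hw1, hw2⟩
            rw [hCq] at hmem; exact hmem
          · exact hw1
        have hRC : R ∩ C = ∅ := by
          rw [eq_empty_iff_forall_notMem]
          rintro w ⟨⟨_, hw2⟩, hw3⟩
          have : w ∈ C ∩ q := ⟨hw3, hw2⟩
          rw [hCq] at this; exact this
        have hRcl : IsClosed R := by
          have hRp : R = (C ∪ E) ∩ pᶜ := by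
            apply Subset.antisymm
            · rintro w ⟨hw1, hw2⟩
              refine ⟨hw1, fun hwp => ?_⟩
              have : w ∈ (C ∪ E) ∩ (p ∩ q) := ⟨hw1, hwp, hw2⟩
              rw [hres] at this; exact this
            · rintro w ⟨hw1, hw2⟩
              rcases hsub hw1 with h | h
              exacts [absurd h hw2, ⟨hw1, h⟩]
          rw [hRp]
          exact (hCcl.union hEcl).inter hp.isClosed_compl
        have hRcompl : Rᶜ = ((C ∪ E) ∩ qᶜ) ∪ E' := by
          apply Subset.antisymm
          · intro w hw
            by_cases hw1 : w ∈ C ∪ E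
            · exact Or.inl ⟨hw1, fun hwq => hw ⟨hw1, hwq⟩⟩
            · have hwD : w ∈ D := by
                rcases (eq_univ_iff_forall.mp hcover) w with h | h
                · exact absurd (Or.inl h) hw1
                · exact h
              rw [← hEE'] at hwD
              rcases hwD with h | h
              · exact absurd (Or.inr h) hw1
              · exact Or.inr h
          · rintro w (⟨hw1, hw2⟩ | hw)
            · exact fun hwR => hw2 hwR.2
            · intro hwR
              have : w ∈ E ∩ E' := ⟨hRE hwR, hw⟩
              rw [hEdisj] at this; exact this
        have hRopen : IsOpen R := by
          have hc : IsClosed Rᶜ := by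
            rw [hRcompl]
            exact ((hCcl.union hEcl).inter hq.isClosed_compl).union hE'cl
          simpa using hc.isOpen_compl
        have hRclopen : IsClopen R := ⟨hRcl, hRopen⟩
        rcases isClopen_iff.mp hRclopen with h | h
        · rw [h] at hne2; exact hne2.ne_empty rfl
        · obtain ⟨c, hc⟩ := hCne
          have : c ∈ R := h ▸ mem_univ c
          have : c ∈ R ∩ C := ⟨this, hc⟩
          rw [hRC] at this; exact this
      -- now prove preconnectedness
      intro p q hp hq hsub hne1 hne2
      by_contra hres
      rw [not_nonempty_iff_eq_empty] at hres
      by_cases hCq : C ∩ q = ∅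
      · exact hcore p q hp hq hsub hne2 hres hCq
      · by_cases hCp : C ∩ p = ∅
        · apply hcore q p hq hp (by rwa [union_comm q p]) hne1
            (by rwa [inter_comm q p]) hCp
        · obtain ⟨w, hw⟩ := hCc p q hp hq ((subset_union_left).trans hsub)
            (nonempty_iff_ne_empty.mpr hCp) (nonempty_iff_ne_empty.mpr hCq)
          have : w ∈ (C ∪ E) ∩ (p ∩ q) := ⟨Or.inl hw.1, hw.2⟩
          rw [hres] at this; exact this
    -- final decomposition
    have hA := key E₁ E₂ hE₁cl hE₂cl hunion hdisj
    have hB := key E₂ E₁ hE₂cl hE₁cl (by rwa [union_comm]) (by rwa [inter_comm])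
    -- find a point of E₂ outside C (and outside E₁)
    have hwit : ∀ (E : Set X) (w₀ : X) (wopen : Set X), IsOpen wopen → E = D ∩ wopen →
        w₀ ∈ E → ∃ w, w ∈ E ∧ w ∉ C := by
      intro E w₀ wo hwo hEeq hw₀
      have hw₀D : w₀ ∈ D := (hEeq ▸ hw₀).1
      have hw₀o : w₀ ∈ wo := (hEeq ▸ hw₀).2
      rcases mem_closure_iff.mp hw₀D wo hwo hw₀o with ⟨w, hw1, hw2⟩
      exact ⟨w, hEeq ▸ ⟨subset_closure hw2, hw1⟩, hw2⟩
    obtain ⟨w₂, hw₂E, hw₂C⟩ := hwit E₂ b v hv hE₂v hbE₂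
    obtain ⟨w₁, hw₁E, hw₁C⟩ := hwit E₁ a u hu hE₁u haE₁
    apply hindec
    refine ⟨C ∪ E₁, C ∪ E₂, hCcl.union hE₁cl, ⟨hCne.mono subset_union_left, hA⟩, ?_,
      hCcl.union hE₂cl, ⟨hCne.mono subset_union_left, hB⟩, ?_, ?_⟩
    · intro h
      have : w₂ ∈ C ∪ E₁ := h ▸ mem_univ w₂
      rcases this with h' | h'
      · exact hw₂C h'
      · have : w₂ ∈ E₁ ∩ E₂ := ⟨h', hw₂E⟩
        rw [hdisj] at this; exact this
    · intro h
      have : w₁ ∈ C ∪ E₂ := h ▸ mem_univ w₁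
      rcases this with h' | h'
      · exact hw₁C h'
      · have : w₁ ∈ E₁ ∩ E₂ := ⟨hw₁E, h'⟩
        rw [hdisj] at this; exact this
    · rw [union_union_union_comm, union_self, hunion]
      exact hcover

end Proof2Aux

section Proof2Metric

variable {X : Type*} [MetricSpace X]

/-- The closure of any `M`-avoiding composant meets `M`. -/
lemma touch
    (hsemi : ∀ x y : X, ∃ K : Set X, IsCompact K ∧ IsConnected K ∧ K.Nontrivial ∧ x ∈ K ∧ y ∈ K)
    {M : Set X} (hMcp : IsCompact M) (hMc : IsPreconnected M) (hMne : M.Nonempty)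
    {z : X} (hz : z ∉ M) : (closure (cls M z) ∩ M).Nonempty := by
  by_contra hcon
  rw [not_nonempty_iff_eq_empty] at hcon
  have hclsne : (cls M z).Nonempty := ⟨z, cls_self hz⟩
  obtain ⟨m₀, hm₀M, hm₀⟩ := hMcp.exists_isMinOn hMne
    ((continuous_infDist_pt (cls M z)).continuousOn)
  set δ₀ := infDist m₀ (cls M z) with hδ₀def
  have hδ₀ : 0 < δ₀ := by
    rcases (infDist_nonneg : (0:ℝ) ≤ δ₀).lt_or_eq with h | h
    · exact h
    · exfalso
      have h1 : m₀ ∈ closure (cls M z) := (mem_closure_iff_infDist_zero hclsne).mpr h.symm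
      have h2 : m₀ ∈ closure (cls M z) ∩ M := ⟨h1, hm₀M⟩
      rw [hcon] at h2; exact h2
  have hdz : 0 < infDist z M := by
    rcases (infDist_nonneg : (0:ℝ) ≤ infDist z M).lt_or_eq with h | h
    · exact h
    · exfalso
      have h1 : z ∈ closure M := (mem_closure_iff_infDist_zero hMne).mpr h.symm
      rw [hMcp.isClosed.closure_eq] at h1
      exact hz h1
  obtain ⟨x₀, hx₀⟩ := id hMne
  obtain ⟨J, hJcp, hJc, -, hzJ, hx₀J⟩ := hsemi z x₀
  set N := J ∪ M with hN
  have hNcp : IsCompact N := hJcp.union hMcp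
  have hNc : IsPreconnected N := IsPreconnected.union x₀ hx₀J hx₀ hJc.isPreconnected hMc
  set δ := min (δ₀ / 2) (infDist z M / 2) with hδdef
  have hδ : 0 < δ := lt_min (by linarith) (by linarith)
  set A := N ∩ {w | δ ≤ infDist w M} with hA
  have hAcl : IsClosed A :=
    hNcp.isClosed.inter (isClosed_le continuous_const (continuous_infDist_pt M))
  have hzA : z ∈ A := by
    refine ⟨Or.inl hzJ, ?_⟩
    simp only [mem_setOf_eq]
    calc δ ≤ infDist z M / 2 := min_le_right _ _
    _ ≤ infDist z M := by linarith
  have hAne : A ≠ N := by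
    intro h
    have h1 : x₀ ∈ A := h ▸ (Or.inr hx₀ : x₀ ∈ N)
    have h2 : δ ≤ infDist x₀ M := h1.2
    rw [infDist_zero_of_mem hx₀] at h2
    exact absurd h2 (not_le.mpr hδ)
  obtain ⟨w, hwC, hwcl⟩ := bb hNcp hNc hAcl inter_subset_left hAne hzA
  have hwd : infDist w M ≤ δ := by
    have hsub : N \ A ⊆ {u | infDist u M ≤ δ} := by
      rintro u ⟨huN, huA⟩
      simp only [mem_setOf_eq]
      by_contra h
      exact huA ⟨huN, (not_le.mp h).le⟩
    exact closure_minimal hsub (isClosed_le (continuous_infDist_pt M) continuous_const) hwcl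
  have hCsub : connectedComponentIn A z ⊆ cls M z := by
    intro w' hw'
    refine ⟨connectedComponentIn A z,
      hNcp.of_isClosed_subset (isClosed_connectedComponentIn' hAcl)
        ((connectedComponentIn_subset A z).trans inter_subset_left),
      isPreconnected_connectedComponentIn, ?_, mem_connectedComponentIn hzA, hw'⟩
    rw [eq_empty_iff_forall_notMem]
    rintro u ⟨huC, huM⟩
    have h1 : δ ≤ infDist u M := ((connectedComponentIn_subset A z) huC).2
    rw [infDist_zero_of_mem huM] at h1
    exact absurd h1 (not_le.mpr hδ)
  obtain ⟨m, hmM, hmd⟩ := hMcp.exists_infDist_eq_dist hMne w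
  have h1 : infDist m (cls M z) ≤ dist m w := infDist_le_dist_of_mem (hCsub hwC)
  have h2 : δ₀ ≤ infDist m (cls M z) := isMinOn_iff.mp hm₀ m hmM
  have h3 : dist m w = infDist w M := by rw [dist_comm]; exact hmd.symm
  have h4 : δ ≤ δ₀ / 2 := min_le_left _ _
  linarith

lemma factS [Nontrivial X]
    (hsemi : ∀ x y : X, ∃ K : Set X, IsCompact K ∧ IsConnected K ∧ K.Nontrivial ∧ x ∈ K ∧ y ∈ K)
    (z : X) {ε : ℝ} (hε : 0 < ε) :
    ∃ C : Set X, IsCompact C ∧ IsPreconnected C ∧ C.Nontrivial ∧ z ∈ C ∧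
      C ⊆ closedBall z ε ∧ C ≠ univ := by
  obtain ⟨y₀, hy₀⟩ := exists_ne z
  have hdy : 0 < dist z y₀ := dist_pos.mpr (fun h => hy₀ h.symm)
  set ε' := min ε (dist z y₀ / 2) with hε'def
  have hε' : 0 < ε' := lt_min hε (by linarith)
  obtain ⟨L, hLcp, hLc, -, hzL, hyL⟩ := hsemi z y₀
  set A := L ∩ closedBall z ε' with hA
  have hy₀A : y₀ ∉ A := by
    rintro ⟨-, h⟩
    rw [mem_closedBall, dist_comm] at h
    have h2 : ε' ≤ dist z y₀ / 2 := min_le_right _ _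
    linarith
  have hAcl : IsClosed A := hLcp.isClosed.inter isClosed_closedBall
  have hzA : z ∈ A := ⟨hzL, mem_closedBall_self hε'.le⟩
  have hAne : A ≠ L := fun h => hy₀A (h.symm ▸ hyL)
  obtain ⟨w, hwC, hwcl⟩ := bb hLcp hLc.isPreconnected hAcl inter_subset_left hAne hzA
  have hwz : ε' ≤ dist w z := by
    have hsub : L \ A ⊆ {u | ε' ≤ dist u z} := by
      rintro u ⟨huL, huA⟩
      simp only [mem_setOf_eq]
      by_contra h
      exact huA ⟨huL, mem_closedBall.mpr (not_le.mp h).le⟩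
    exact closure_minimal hsub
      (isClosed_le continuous_const (continuous_id.dist continuous_const)) hwcl
  set C := connectedComponentIn A z with hC
  have hCsubA : C ⊆ A := connectedComponentIn_subset A z
  have hCcl : IsClosed C := isClosed_connectedComponentIn' hAcl
  have hCcp : IsCompact C := hLcp.of_isClosed_subset hCcl (hCsubA.trans inter_subset_left)
  have hzC : z ∈ C := mem_connectedComponentIn hzA
  have hwne : w ≠ z := by
    intro h
    rw [h, dist_self] at hwz
    linarith
  refine ⟨C, hCcp, isPreconnected_connectedComponentIn, ⟨w, hwC, z, hzC, hwne⟩, hzC,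
    (hCsubA.trans inter_subset_right).trans (closedBall_subset_closedBall (min_le_left _ _)), ?_⟩
  intro h
  exact hy₀A (hCsubA (h ▸ mem_univ y₀))


lemma mainNC [ConnectedSpace X]
    (hsemi : ∀ x y : X, ∃ K : Set X, IsCompact K ∧ IsConnected K ∧ K.Nontrivial ∧ x ∈ K ∧ y ∈ K)
    (hindec : ¬ ∃ A B : Set X,
      IsClosed A ∧ IsConnected A ∧ A ≠ Set.univ ∧
      IsClosed B ∧ IsConnected B ∧ B ≠ Set.univ ∧ A ∪ B = Set.univ)
    {M : Set X} (hMcp : IsCompact M) (hMc : IsPreconnected M) (hMne : M.Nonempty)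
    (hMu : M ≠ univ) {k : ℕ} (V : Fin k → Set X)
    (hVo : ∀ i, IsOpen (V i)) (hVne : ∀ i, (V i).Nonempty) :
    ∃ z, z ∉ M ∧ ∀ i, (cls M z ∩ V i).Nonempty := by
  classical
  by_contra hcon
  push_neg at hcon
  obtain ⟨x₀, hx₀⟩ := id hMne
  have hMint : interior M = ∅ := lemma1 hindec hMcp.isClosed hMc hMne hMu
  set S : X → Finset (Fin k) :=
    fun z => Finset.univ.filter (fun i => (cls M z ∩ V i).Nonempty) with hS
  set Y : Finset (Fin k) → Set X :=
    fun T => M ∪ ⋃ z ∈ {z' : X | z' ∉ M ∧ S z' = T}, cls M z with hY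
  set A : Finset (Fin k) → Set X := fun T => closure (Y T) with hA
  have hAx₀ : ∀ T, x₀ ∈ A T := fun T => subset_closure (Or.inl hx₀)
  have hAcl : ∀ T, IsClosed (A T) := fun T => isClosed_closure
  have hAc : ∀ T, IsPreconnected (A T) := by
    intro T
    apply IsPreconnected.closure
    apply isPreconnected_of_forall x₀
    rintro y (hy | hy)
    · exact ⟨M, subset_union_left, hx₀, hy, hMc⟩
    · rw [mem_iUnion₂] at hy
      obtain ⟨z, ⟨hzM, hzS⟩, hycls⟩ := hy
      obtain ⟨m, hmcl, hmM⟩ := touch hsemi hMcp hMc hMne hzM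
      refine ⟨M ∪ cls M z, ?_, Or.inl hx₀, Or.inr hycls, ?_⟩
      · apply union_subset subset_union_left
        exact (subset_biUnion_of_mem
          (show z ∈ {z' : X | z' ∉ M ∧ S z' = T} from ⟨hzM, hzS⟩)).trans subset_union_right
      · have h1 : IsPreconnected (insert m (cls M z)) :=
          cls_preconn.subset_closure (subset_insert _ _)
            (insert_subset hmcl subset_closure)
        have h2 : IsPreconnected (insert m (cls M z) ∪ M) :=
          IsPreconnected.union m (mem_insert _ _) hmM h1 hMc
        have h3 : insert m (cls M z) ∪ M = M ∪ cls M z := by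
          have hm2 : m ∈ cls M z ∪ M := Or.inr hmM
          rw [insert_union, insert_eq_of_mem hm2, union_comm]
        rw [← h3]; exact h2
  have hAu : ∀ T, A T ≠ univ := by
    intro T hT
    by_cases hTu : T = Finset.univ
    · have hempty : {z' : X | z' ∉ M ∧ S z' = T} = ∅ := by
        rw [eq_empty_iff_forall_notMem]
        rintro z' ⟨hzM, hzS⟩
        obtain ⟨i, hi⟩ := hcon z' hzM
        have h2 : i ∈ S z' := by rw [hzS, hTu]; exact Finset.mem_univ i
        exact (Finset.mem_filter.mp h2).2.ne_empty hi
      rw [hA] at hT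
      simp only [hY, hempty, biUnion_empty, union_empty] at hT
      rw [hMcp.isClosed.closure_eq] at hT
      exact hMu hT
    · obtain ⟨i₀, hi₀⟩ : ∃ i₀, i₀ ∉ T := by
        by_contra h
        push_neg at h
        exact hTu (Finset.eq_univ_iff_forall.mpr h)
      have hVM : (V i₀ ∩ Mᶜ).Nonempty := by
        by_contra h'
        rw [not_nonempty_iff_eq_empty] at h'
        have hsub : V i₀ ⊆ M := by
          intro w hw
          by_contra hwM
          have hmem : w ∈ V i₀ ∩ Mᶜ := ⟨hw, hwM⟩
          rw [h'] at hmem; exact hmem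
        have h2 : V i₀ ⊆ interior M := interior_maximal hsub (hVo i₀)
        rw [hMint] at h2
        obtain ⟨w, hw⟩ := hVne i₀
        exact h2 hw
      have hdense : Dense (Y T) := by
        rw [dense_iff_closure_eq]; exact hT
      obtain ⟨w, hwY, hwV⟩ := hdense.exists_mem_open
        ((hVo i₀).inter hMcp.isClosed.isOpen_compl) hVM
      rcases hwY with hwM | hwY
      · exact hwV.2 hwM
      · rw [mem_iUnion₂] at hwY
        obtain ⟨z, ⟨hzM, hzS⟩, hwz⟩ := hwY
        have hmem : i₀ ∈ S z := Finset.mem_filter.mpr ⟨Finset.mem_univ _, ⟨w, hwz, hwV.1⟩⟩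
        rw [hzS] at hmem
        exact hi₀ hmem
  have hcover : (⋃ T ∈ (Finset.univ : Finset (Finset (Fin k))), A T) = univ := by
    apply eq_univ_of_forall
    intro w
    rw [mem_iUnion₂]
    by_cases hwM : w ∈ M
    · exact ⟨∅, Finset.mem_univ _, subset_closure (Or.inl hwM)⟩
    · refine ⟨S w, Finset.mem_univ _, subset_closure (Or.inr ?_)⟩
      rw [mem_iUnion₂]
      exact ⟨w, ⟨hwM, rfl⟩, cls_self hwM⟩
  exact finUnion hindec Finset.univ A x₀ hAcl hAc hAu hAx₀ hcover


/-- In the compact case: from any point there are proper subcontinua reaching into any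
nonempty open set. -/
lemma cc2 [ConnectedSpace X] [Nontrivial X]
    (hsemi : ∀ x y : X, ∃ K : Set X, IsCompact K ∧ IsConnected K ∧ K.Nontrivial ∧ x ∈ K ∧ y ∈ K)
    [CompactSpace X] (x : X) {V : Set X} (hVo : IsOpen V) (hVne : V.Nonempty) :
    ∃ L : Set X, IsCompact L ∧ IsPreconnected L ∧ L ≠ univ ∧ x ∈ L ∧ (L ∩ V).Nonempty := by
  by_cases hxV : x ∈ V
  · obtain ⟨C, h1, h2, h3, h4, h5, h6⟩ := factS hsemi x one_pos
    exact ⟨C, h1, h2, h6, h4, ⟨x, h4, hxV⟩⟩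
  · obtain ⟨y, hyV⟩ := hVne
    have hxy : x ≠ y := fun h => hxV (h ▸ hyV)
    obtain ⟨r₀, hr₀, hball⟩ := Metric.isOpen_iff.mp hVo y hyV
    have hdxy : 0 < dist x y := dist_pos.mpr hxy
    set r := min (r₀ / 2) (dist x y / 2) with hrdef
    have hr : 0 < r := lt_min (by linarith) (by linarith)
    set W := ball y r with hW
    have hclW : closure W ⊆ V := by
      intro u hu
      apply hball
      have h1 : dist u y ≤ r := mem_closedBall.mp (closure_ball_subset_closedBall hu)
      have h2 : r ≤ r₀ / 2 := min_le_left _ _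
      rw [mem_ball]
      linarith
    have hxclW : x ∉ closure W := by
      intro hx
      have h1 : dist x y ≤ r := mem_closedBall.mp (closure_ball_subset_closedBall hx)
      have h2 : r ≤ dist x y / 2 := min_le_right _ _
      linarith
    set A := Wᶜ with hA
    have hAcl : IsClosed A := isClosed_compl_iff.mpr isOpen_ball
    have hxA : x ∈ A := fun hxW => hxclW (subset_closure hxW)
    have hAu : A ≠ univ := by
      intro h
      have hyA : y ∈ A := h ▸ mem_univ y
      exact hyA (mem_ball_self hr)
    obtain ⟨w, hwL, hwcl⟩ := bb isCompact_univ isPreconnected_univ hAcl (subset_univ A)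
      (by simpa using hAu) hxA
    have hWeq : univ \ A = W := by
      rw [hA]; ext u; simp
    rw [hWeq] at hwcl
    refine ⟨connectedComponentIn A x, (isClosed_connectedComponentIn' hAcl).isCompact,
      isPreconnected_connectedComponentIn, ?_, mem_connectedComponentIn hxA,
      ⟨w, hwL, hclW hwcl⟩⟩
    intro h
    have hyA : y ∈ A := connectedComponentIn_subset A x (h ▸ mem_univ y)
    exact hyA (mem_ball_self hr)


/-- Compact case: the step lemma. -/
lemma stepC [ConnectedSpace X] [Nontrivial X] [CompactSpace X]
    (hsemi : ∀ x y : X, ∃ K : Set X, IsCompact K ∧ IsConnected K ∧ K.Nontrivial ∧ x ∈ K ∧ y ∈ K)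
    (hindec : ¬ ∃ A B : Set X,
      IsClosed A ∧ IsConnected A ∧ A ≠ Set.univ ∧
      IsClosed B ∧ IsConnected B ∧ B ≠ Set.univ ∧ A ∪ B = Set.univ)
    (f : ℕ → Set X) (hfo : ∀ j, IsOpen (f j)) (hfne : ∀ j, (f j).Nonempty)
    (hfb : ∀ U : Set X, IsOpen U → U.Nonempty → ∃ j, f j ⊆ U)
    (s : Finset (Set X))
    (hs : ∀ L ∈ s, IsCompact L ∧ IsPreconnected L ∧ L.Nonempty ∧ L ≠ univ)
    (n : ℕ) :
    ∃ K : Set X, (IsCompact K ∧ IsPreconnected K ∧ K.Nontrivial ∧ K ≠ univ) ∧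
      (∀ L ∈ s, K ∩ L = ∅) ∧ ∀ i ≤ n, (K ∩ f i).Nonempty := by
  classical
  -- choose a point in each L ∈ s
  have hzch : ∀ L : {L // L ∈ s}, ∃ z, z ∈ (L : Set X) := fun L => (hs L L.2).2.2.1
  choose z hz using hzch
  set D : {L // L ∈ s} × ℕ → Set X := fun p => connectedComponentIn (f p.2)ᶜ (z p.1) with hD
  have hDcl : ∀ p, IsClosed (D p) := fun p =>
    isClosed_connectedComponentIn' (hfo p.2).isClosed_compl
  have hDu : ∀ p, D p ≠ univ := by
    intro p h
    obtain ⟨y, hy⟩ := hfne p.2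
    have : y ∈ (f p.2)ᶜ := connectedComponentIn_subset _ _ (h ▸ mem_univ y)
    exact this hy
  have hDint : ∀ p, interior (D p) = ∅ := by
    intro p
    rcases eq_empty_or_nonempty (D p) with h | h
    · rw [h]; exact interior_empty
    · exact lemma1 hindec (hDcl p) isPreconnected_connectedComponentIn h (hDu p)
  have hdense : Dense (⋂ p, (D p)ᶜ) :=
    dense_iInter_of_isOpen (fun p => (hDcl p).isOpen_compl)
      (fun p => interior_eq_empty_iff_dense_compl.mp (hDint p))
  obtain ⟨x, hx⟩ := hdense.nonempty
  have hxD : ∀ p, x ∉ D p := by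
    intro p hp
    exact (mem_iInter.mp hx p) hp
  -- any proper subcontinuum through x misses every L ∈ s
  have hav : ∀ J : Set X, IsCompact J → IsPreconnected J → J ≠ univ → x ∈ J →
      ∀ L ∈ s, J ∩ L = ∅ := by
    intro J hJcp hJc hJu hxJ L hL
    by_contra hne'
    obtain ⟨w, hwJ, hwL⟩ := nonempty_iff_ne_empty.mpr hne'
    have hun : IsPreconnected (J ∪ L) := IsPreconnected.union w hwJ hwL hJc (hs L hL).2.1
    have hcp : IsCompact (J ∪ L) := hJcp.union (hs L hL).1
    have huu : J ∪ L ≠ univ := by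
      intro h
      exact hindec ⟨J, L, hJcp.isClosed, ⟨⟨x, hxJ⟩, hJc⟩, hJu, (hs L hL).1.isClosed,
        ⟨(hs L hL).2.2.1, (hs L hL).2.1⟩, (hs L hL).2.2.2, h⟩
    obtain ⟨j, hj⟩ := hfb (J ∪ L)ᶜ hcp.isClosed.isOpen_compl (nonempty_compl.mpr huu)
    have hsub : J ∪ L ⊆ (f j)ᶜ := by
      intro u hu hfu
      exact hj hfu hu
    have hzJL : z ⟨L, hL⟩ ∈ J ∪ L := Or.inr (hz ⟨L, hL⟩)
    have hmem : x ∈ D ⟨⟨L, hL⟩, j⟩ :=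
      (hun.subset_connectedComponentIn hzJL hsub) (Or.inl hxJ)
    exact hxD _ hmem
  -- build K
  obtain ⟨C, hCcp, hCc, hCnt, hxC, -, hCu⟩ := factS hsemi x one_pos
  have hLch : ∀ i : Fin (n + 1), ∃ L : Set X,
      IsCompact L ∧ IsPreconnected L ∧ L ≠ univ ∧ x ∈ L ∧ (L ∩ f i).Nonempty :=
    fun i => cc2 hsemi x (hfo i) (hfne i)
  choose Lf hLf1 hLf2 hLf3 hLf4 hLf5 using hLch
  set K := C ∪ ⋃ i : Fin (n + 1), Lf i with hK
  have hKcp : IsCompact K := hCcp.union (isCompact_iUnion fun i => hLf1 i)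
  have hKc : IsPreconnected K := by
    apply isPreconnected_of_forall x
    rintro y (hy | hy)
    · exact ⟨C, subset_union_left, hxC, hy, hCc⟩
    · rw [mem_iUnion] at hy
      obtain ⟨i, hyi⟩ := hy
      exact ⟨Lf i, (subset_iUnion Lf i).trans subset_union_right, hLf4 i, hyi, hLf2 i⟩
  have hKnt : K.Nontrivial := hCnt.mono subset_union_left
  -- K ≠ univ by induction over the finitely many pieces
  have hKu : K ≠ univ := by
    -- use finUnion-like argument: pairwise union of proper continua through x
    have main : ∀ t : Finset (Fin (n + 1)), (C ∪ ⋃ i ∈ t, Lf i) ≠ univ ∧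
        IsCompact (C ∪ ⋃ i ∈ t, Lf i) ∧ IsPreconnected (C ∪ ⋃ i ∈ t, Lf i) := by
      intro t
      induction t using Finset.induction_on with
      | empty =>
        simp only [Finset.notMem_empty, iUnion_of_empty, iUnion_empty, union_empty]
        exact ⟨hCu, hCcp, hCc⟩
      | @insert a t ha ih =>
        obtain ⟨ih1, ih2, ih3⟩ := ih
        have hrw : C ∪ ⋃ i ∈ insert a t, Lf i = Lf a ∪ (C ∪ ⋃ i ∈ t, Lf i) := by
          rw [Finset.set_biUnion_insert]
          ext u
          simp only [mem_union, mem_iUnion]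
          tauto
        rw [hrw]
        have hBx : x ∈ C ∪ ⋃ i ∈ t, Lf i := Or.inl hxC
        have hBc : IsPreconnected (Lf a ∪ (C ∪ ⋃ i ∈ t, Lf i)) :=
          IsPreconnected.union x (hLf4 a) hBx (hLf2 a) ih3
        refine ⟨?_, (hLf1 a).union ih2, hBc⟩
        intro h
        exact hindec ⟨Lf a, C ∪ ⋃ i ∈ t, Lf i, (hLf1 a).isClosed, ⟨⟨x, hLf4 a⟩, hLf2 a⟩,
          hLf3 a, ih2.isClosed, ⟨⟨x, hBx⟩, ih3⟩, ih1, h⟩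
    have h1 := (main Finset.univ).1
    have h2 : C ∪ ⋃ i ∈ (Finset.univ : Finset (Fin (n+1))), Lf i = K := by
      rw [hK]
      congr 1
      ext u
      simp
    rwa [h2] at h1
  refine ⟨K, ⟨hKcp, hKc, hKnt, hKu⟩, ?_, ?_⟩
  · intro L hL
    rw [eq_empty_iff_forall_notMem]
    rintro u ⟨huK, huL⟩
    rcases huK with huC | huU
    · have := hav C hCcp hCc hCu hxC L hL
      rw [eq_empty_iff_forall_notMem] at this
      exact this u ⟨huC, huL⟩
    · rw [mem_iUnion] at huU
      obtain ⟨i, hui⟩ := huU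
      have := hav (Lf i) (hLf1 i) (hLf2 i) (hLf3 i) (hLf4 i) L hL
      rw [eq_empty_iff_forall_notMem] at this
      exact this u ⟨hui, huL⟩
  · intro i hi
    obtain ⟨u, hu1, hu2⟩ := hLf5 ⟨i, Nat.lt_succ_of_le hi⟩
    exact ⟨u, Or.inr (mem_iUnion.mpr ⟨⟨i, Nat.lt_succ_of_le hi⟩, hu1⟩), hu2⟩


/-- Noncompact case: the step lemma. -/
lemma stepN [ConnectedSpace X] [Nontrivial X]
    (hsemi : ∀ x y : X, ∃ K : Set X, IsCompact K ∧ IsConnected K ∧ K.Nontrivial ∧ x ∈ K ∧ y ∈ K)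
    (hindec : ¬ ∃ A B : Set X,
      IsClosed A ∧ IsConnected A ∧ A ≠ Set.univ ∧
      IsClosed B ∧ IsConnected B ∧ B ≠ Set.univ ∧ A ∪ B = Set.univ)
    (hX : ¬ IsCompact (univ : Set X))
    (f : ℕ → Set X) (hfo : ∀ j, IsOpen (f j)) (hfne : ∀ j, (f j).Nonempty)
    {M : Set X} (hM : IsCompact M ∧ IsPreconnected M ∧ M.Nonempty) (n : ℕ) :
    ∃ K M' : Set X, (IsCompact K ∧ IsPreconnected K ∧ K.Nontrivial ∧ K ≠ univ) ∧
      K ∩ M = ∅ ∧ (∀ i ≤ n, (K ∩ f i).Nonempty) ∧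
      (IsCompact M' ∧ IsPreconnected M' ∧ M'.Nonempty) ∧ M ⊆ M' ∧ K ⊆ M' := by
  obtain ⟨hMcp, hMc, hMne⟩ := hM
  have hMu : M ≠ univ := fun h => hX (h ▸ hMcp)
  obtain ⟨z, hzM, hcls⟩ := mainNC hsemi hindec hMcp hMc hMne hMu
    (fun i : Fin (n + 1) => f i) (fun i => hfo i) (fun i => hfne i)
  have hdz : 0 < infDist z M := by
    rcases (infDist_nonneg : (0:ℝ) ≤ infDist z M).lt_or_eq with h | h
    · exact h
    · exfalso
      have h1 : z ∈ closure M := (mem_closure_iff_infDist_zero hMne).mpr h.symm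
      rw [hMcp.isClosed.closure_eq] at h1
      exact hzM h1
  obtain ⟨C, hCcp, hCc, hCnt, hzC, hCball, -⟩ := factS hsemi z (half_pos hdz)
  have hCM : C ∩ M = ∅ := by
    rw [eq_empty_iff_forall_notMem]
    rintro w ⟨hwC, hwM⟩
    have h1 : infDist z M ≤ dist z w := infDist_le_dist_of_mem hwM
    have h2 : dist z w ≤ infDist z M / 2 := by
      have h3 := hCball hwC
      rw [mem_closedBall] at h3
      rwa [dist_comm] at h3
    linarith
  choose y hy using fun i : Fin (n + 1) => hcls i
  have hy1 : ∀ i : Fin (n + 1), y i ∈ cls M z := fun i => (hy i).1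
  have hy2 : ∀ i : Fin (n + 1), y i ∈ f (i : ℕ) := fun i => (hy i).2
  choose L hL1 hL2 hL3 hL4 hL5 using fun i : Fin (n + 1) => hy1 i
  set K := C ∪ ⋃ i : Fin (n + 1), L i with hK
  have hKcp : IsCompact K := hCcp.union (isCompact_iUnion fun i => hL1 i)
  have hKc : IsPreconnected K := by
    apply isPreconnected_of_forall z
    rintro w (hw | hw)
    · exact ⟨C, subset_union_left, hzC, hw, hCc⟩
    · rw [mem_iUnion] at hw
      obtain ⟨i, hwi⟩ := hw
      exact ⟨L i, (subset_iUnion L i).trans subset_union_right, hL4 i, hwi, hL2 i⟩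
  have hKM : K ∩ M = ∅ := by
    rw [eq_empty_iff_forall_notMem]
    rintro w ⟨hwK, hwM⟩
    rcases hwK with hw | hw
    · rw [eq_empty_iff_forall_notMem] at hCM
      exact hCM w ⟨hw, hwM⟩
    · rw [mem_iUnion] at hw
      obtain ⟨i, hwi⟩ := hw
      have := hL3 i
      rw [eq_empty_iff_forall_notMem] at this
      exact this w ⟨hwi, hwM⟩
  obtain ⟨x₀, hx₀⟩ := id hMne
  obtain ⟨J, hJcp, hJc, -, hzJ, hx₀J⟩ := hsemi z x₀
  set M' := (M ∪ J) ∪ K with hM'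
  have hM'cp : IsCompact M' := (hMcp.union hJcp).union hKcp
  have hM'c : IsPreconnected M' := by
    apply isPreconnected_of_forall x₀
    rintro w ((hw | hw) | hw)
    · exact ⟨M, subset_union_left.trans subset_union_left, hx₀, hw, hMc⟩
    · exact ⟨J, subset_union_right.trans subset_union_left, hx₀J, hw, hJc.isPreconnected⟩
    · refine ⟨K ∪ J, ?_, Or.inr hx₀J, Or.inl hw,
        IsPreconnected.union z (Or.inl hzC) hzJ hKc hJc.isPreconnected⟩
      apply union_subset subset_union_right
      exact subset_union_right.trans subset_union_left
  refine ⟨K, M', ⟨hKcp, hKc, hCnt.mono subset_union_left,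
    fun h => hX (h ▸ hKcp)⟩, hKM, ?_, ⟨hM'cp, hM'c, ⟨x₀, Or.inl (Or.inl hx₀)⟩⟩,
    subset_union_left.trans subset_union_left, subset_union_right⟩
  intro i hi
  refine ⟨y ⟨i, Nat.lt_succ_of_le hi⟩,
    Or.inr (mem_iUnion.mpr ⟨⟨i, Nat.lt_succ_of_le hi⟩, hL5 _⟩), hy2 ⟨i, Nat.lt_succ_of_le hi⟩⟩


end Proof2Metric

/-- Recursive assembly of the sequence. -/
lemma assemble [TopologicalSpace X] (f : ℕ → Set X) (Inv : Set X → Prop)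
    (W₀ : Set X) (h₀ : Inv W₀)
    (hstep : ∀ W, Inv W → ∀ n : ℕ, ∃ p : Set X × Set X,
      (IsCompact p.1 ∧ IsPreconnected p.1 ∧ p.1.Nontrivial ∧ p.1 ≠ univ) ∧
      p.1 ∩ W = ∅ ∧ (∀ i ≤ n, (p.1 ∩ f i).Nonempty) ∧ Inv p.2 ∧ W ⊆ p.2 ∧ p.1 ⊆ p.2) :
    ∃ K : ℕ → Set X,
      (∀ n, IsCompact (K n) ∧ IsPreconnected (K n) ∧ (K n).Nontrivial ∧ K n ≠ univ) ∧
      (∀ m n, m < n → K n ∩ K m = ∅) ∧ (∀ n, ∀ i ≤ n, (K n ∩ f i).Nonempty) := by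
  classical
  choose p hp1 hp2 hp3 hp4 hp5 hp6 using hstep
  let step : {W : Set X // Inv W} → ℕ → {W : Set X // Inv W} :=
    fun q n => ⟨(p q.1 q.2 n).2, hp4 q.1 q.2 n⟩
  let g : ℕ → {W : Set X // Inv W} := fun n => Nat.rec ⟨W₀, h₀⟩ (fun n q => step q n) n
  set K : ℕ → Set X := fun n => (p (g n).1 (g n).2 n).1 with hKdef
  have hKW : ∀ n, K n ⊆ (g (n + 1)).1 := fun n => hp6 _ _ _
  have hWsub : ∀ n, (g n).1 ⊆ (g (n + 1)).1 := fun n => hp5 _ _ _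
  have hWmono : ∀ m n, m ≤ n → (g m).1 ⊆ (g n).1 := by
    intro m n h
    induction h with
    | refl => exact subset_rfl
    | step h ih => exact ih.trans (hWsub _)
  refine ⟨K, fun n => hp1 _ _ _, ?_, fun n => hp3 _ _ _⟩
  intro m n hmn
  have h1 : K m ⊆ (g n).1 := (hKW m).trans (hWmono (m + 1) n hmn)
  have h2 : K n ∩ (g n).1 = ∅ := hp2 _ _ _
  rw [eq_empty_iff_forall_notMem]
  rintro u ⟨hu1, hu2⟩
  rw [eq_empty_iff_forall_notMem] at h2
  exact h2 u ⟨hu1, h1 hu2⟩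

/-- Let `X` be a separable metrizable indecomposable semicontinuum with more
than one point. Then there exists a sequence of pairwise disjoint proper subcontinua of `X`
converging to `X` in the Vietoris topology: for every finite collection of nonempty open sets
`U 1, …, U k` there is `N` such that every `K n` with `n ≥ N` meets each `U i`. -/
theorem stmt_2 {X : Type*} [TopologicalSpace X] [TopologicalSpace.MetrizableSpace X]
    [TopologicalSpace.SeparableSpace X] [ConnectedSpace X] [Nontrivial X]
    (hsemi : ∀ x y : X, ∃ K : Set X,
      IsCompact K ∧ IsConnected K ∧ K.Nontrivial ∧ x ∈ K ∧ y ∈ K)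
    (hindec : ¬ ∃ A B : Set X,
      IsClosed A ∧ IsConnected A ∧ A ≠ Set.univ ∧
      IsClosed B ∧ IsConnected B ∧ B ≠ Set.univ ∧ A ∪ B = Set.univ) :
    ∃ K : ℕ → Set X,
      (∀ n, IsCompact (K n) ∧ IsConnected (K n) ∧ (K n).Nontrivial ∧ K n ≠ Set.univ) ∧
      (∀ m n, m ≠ n → Disjoint (K m) (K n)) ∧
      (∀ (k : ℕ) (U : Fin k → Set X), (∀ i, IsOpen (U i) ∧ (U i).Nonempty) →
        ∃ N, ∀ n ≥ N, ∀ i, (K n ∩ U i).Nonempty) := by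
  classical
  letI : MetricSpace X := TopologicalSpace.metrizableSpaceMetric X
  haveI : SecondCountableTopology X := UniformSpace.secondCountable_of_separable X
  obtain ⟨b, hbc, hbne, hbb⟩ := exists_countable_basis X
  have hbnonempty : b.Nonempty := by
    obtain ⟨x⟩ := (inferInstance : Nonempty X)
    have : x ∈ ⋃₀ b := hbb.sUnion_eq ▸ mem_univ x
    obtain ⟨t, ht, -⟩ := this
    exact ⟨t, ht⟩
  obtain ⟨f, hf⟩ := hbc.exists_eq_range hbnonempty
  have hfmem : ∀ j, f j ∈ b := fun j => hf ▸ mem_range_self j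
  have hfo : ∀ j, IsOpen (f j) := fun j => hbb.isOpen (hfmem j)
  have hfne : ∀ j, (f j).Nonempty := fun j =>
    nonempty_iff_ne_empty.mpr (fun h => hbne (h ▸ hfmem j))
  have hfb : ∀ U : Set X, IsOpen U → U.Nonempty → ∃ j, f j ⊆ U := by
    rintro U hU ⟨x, hx⟩
    obtain ⟨t, htb, -, htU⟩ := hbb.exists_subset_of_mem_open hx hU
    rw [hf] at htb
    obtain ⟨j, rfl⟩ := htb
    exact ⟨j, htU⟩
  have core : ∃ K : ℕ → Set X,
      (∀ n, IsCompact (K n) ∧ IsPreconnected (K n) ∧ (K n).Nontrivial ∧ K n ≠ univ) ∧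
      (∀ m n, m < n → K n ∩ K m = ∅) ∧ (∀ n, ∀ i ≤ n, (K n ∩ f i).Nonempty) := by
    by_cases hX : IsCompact (univ : Set X)
    · haveI : CompactSpace X := isCompact_univ_iff.mp hX
      apply assemble f (fun W => ∃ s : Finset (Set X),
        (∀ L ∈ s, IsCompact L ∧ IsPreconnected L ∧ L.Nonempty ∧ L ≠ univ) ∧ W = ⋃₀ ↑s) ∅
        ⟨∅, by simp, by simp⟩
      rintro W ⟨s, hs, hWeq⟩ n
      obtain ⟨K, hK1, hK2, hK3⟩ := stepC hsemi hindec f hfo hfne hfb s hs n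
      refine ⟨(K, W ∪ K), hK1, ?_, hK3, ⟨insert K s, ?_, ?_⟩, subset_union_left,
        subset_union_right⟩
      · rw [eq_empty_iff_forall_notMem]
        rintro u ⟨huK, huW⟩
        rw [hWeq] at huW
        obtain ⟨L, hLs, huL⟩ := huW
        have := hK2 L hLs
        rw [eq_empty_iff_forall_notMem] at this
        exact this u ⟨huK, huL⟩
      · intro L hL
        rcases Finset.mem_insert.mp hL with rfl | hL'
        · exact ⟨hK1.1, hK1.2.1, hK1.2.2.1.nonempty, hK1.2.2.2⟩
        · exact hs L hL'
      · rw [Finset.coe_insert, sUnion_insert, hWeq, union_comm]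
    · obtain ⟨x⟩ := (inferInstance : Nonempty X)
      obtain ⟨C, hCcp, hCc, hCnt, -, -, -⟩ := factS hsemi x one_pos
      apply assemble f (fun W => IsCompact W ∧ IsPreconnected W ∧ W.Nonempty) C
        ⟨hCcp, hCc, hCnt.nonempty⟩
      intro W hW n
      obtain ⟨K, M', hK1, hK2, hK3, hM', hWM', hKM'⟩ := stepN hsemi hindec hX f hfo hfne hW n
      exact ⟨(K, M'), hK1, hK2, hK3, hM', hWM', hKM'⟩
  obtain ⟨K, h1, h2, h3⟩ := core
  refine ⟨K, fun n => ⟨(h1 n).1, ⟨(h1 n).2.2.1.nonempty, (h1 n).2.1⟩, (h1 n).2.2.1,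
    (h1 n).2.2.2⟩, ?_, ?_⟩
  · intro m n hmn
    rcases hmn.lt_or_gt with h | h
    · rw [Set.disjoint_iff_inter_eq_empty, inter_comm]
      exact h2 m n h
    · rw [Set.disjoint_iff_inter_eq_empty]
      exact h2 n m h
  · intro k U hU
    have : ∀ i : Fin k, ∃ j, f j ⊆ U i := fun i => hfb (U i) (hU i).1 (hU i).2
    choose j hj using this
    refine ⟨Finset.univ.sup j, fun n hn i => ?_⟩
    have hji : j i ≤ n := le_trans (Finset.le_sup (Finset.mem_univ i)) hn
    obtain ⟨u, hu1, hu2⟩ := h3 n (j i) hji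
    exact ⟨u, hu1, hj i hu2⟩
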